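/- If the objective is quadratic f(x) = ½xᵀQx + hᵀx with Q ≻ 0, then for every ε ∈ (0, ε̄] with ε̄ = 2λ_min(AAᵀ)λ_min(Q) / (λ_max(Q)² + 2λ_min(Q)λ_max(Q) − λ_min(Q)²), the matrix Q + (2/ε)AᵀA − QAᵀ(AAᵀ)⁻¹A − Aᵀ(AAᵀ)⁻¹AQ is positive semidefinite, so the penalty function f^ε is convex on ℝⁿ. -/

import Mathlib

open Matrix

lemma psd_quad_comb {m : ℕ} {C : Matrix (Fin m) (Fin m) ℝ} (hC : C.IsHermitian)
    (a b c : ℝ) (hpos : ∀ i, 0 ≤ a * (hC.eigenvalues i)^2 + b * hC.eigenvalues i + c) :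
    (a • (C * C) + b • C + c • (1 : Matrix (Fin m) (Fin m) ℝ)).PosSemidef := by
  set U : Matrix (Fin m) (Fin m) ℝ := (hC.eigenvectorUnitary : Matrix (Fin m) (Fin m) ℝ) with hU
  set D : Matrix (Fin m) (Fin m) ℝ := diagonal hC.eigenvalues with hD
  have h1 : U * Uᴴ = 1 := by
    rw [← Matrix.star_eq_conjTranspose]
    exact Unitary.coe_mul_star_self hC.eigenvectorUnitary
  have h2 : Uᴴ * U = 1 := by
    rw [← Matrix.star_eq_conjTranspose]
    exact Unitary.coe_star_mul_self hC.eigenvectorUnitary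
  have hsp : C = U * D * Uᴴ := by
    have := hC.spectral_theorem
    simpa [Matrix.star_eq_conjTranspose, Function.comp] using this
  have hdiag : diagonal (fun i => a * (hC.eigenvalues i)^2 + b * hC.eigenvalues i + c)
      = a • (D * D) + b • D + c • (1 : Matrix (Fin m) (Fin m) ℝ) := by
    ext i j
    rcases eq_or_ne i j with rfl | hij
    · simp [hD, diagonal_mul_diagonal, Matrix.one_apply]
      ring_nf
      tauto
    · simp [hD, diagonal_mul_diagonal, diagonal_apply_ne _ hij, Matrix.one_apply_ne hij]
  have hprod : (U * D * Uᴴ) * (U * D * Uᴴ) = U * (D * D) * Uᴴ := by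
    calc (U * D * Uᴴ) * (U * D * Uᴴ) = U * D * ((Uᴴ * U) * (D * Uᴴ)) := by
          simp only [Matrix.mul_assoc]
      _ = U * (D * D) * Uᴴ := by rw [h2]; simp only [Matrix.one_mul, Matrix.mul_assoc]
  have key : a • (C * C) + b • C + c • (1 : Matrix (Fin m) (Fin m) ℝ)
      = U * diagonal (fun i => a * (hC.eigenvalues i)^2 + b * hC.eigenvalues i + c) * Uᴴ := by
    rw [hdiag]
    conv_lhs => rw [hsp]
    rw [hprod]
    simp only [Matrix.mul_add, Matrix.add_mul, Matrix.mul_smul, Matrix.smul_mul, Matrix.mul_one]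
    rw [h1]
  rw [key]
  exact (posSemidef_diagonal_iff.mpr hpos).mul_mul_conjTranspose_same U

lemma mulVec_dot {k l : ℕ} (N : Matrix (Fin k) (Fin l) ℝ) (x : Fin l → ℝ) (y : Fin k → ℝ) :
    (N *ᵥ x) ⬝ᵥ y = x ⬝ᵥ Nᵀ *ᵥ y := by
  rw [mulVec_transpose, dotProduct_comm, dotProduct_mulVec, dotProduct_comm]

set_option maxHeartbeats 2000000 in
/-- For a quadratic objective `f(x) = ½xᵀQx + hᵀx` with `Q ≻ 0`, for every
`ε ∈ (0, ε̄]` with `ε̄ = 2λmin(AAᵀ)λmin(Q) / (λmax(Q)² + 2λmin(Q)λmax(Q) − λmin(Q)²)`,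
the penalty Hessian `Q + (2/ε)AᵀA − QAᵀ(AAᵀ)⁻¹A − Aᵀ(AAᵀ)⁻¹AQ` is positive
semidefinite, so the penalty function `f^ε` is convex on `ℝⁿ`. -/
theorem stmt_10 (p n : ℕ) [NeZero p] [NeZero n]
    (A : Matrix (Fin p) (Fin n) ℝ) (hA : A.rank = p)
    (hAAT : (A * Aᵀ).IsHermitian)
    (b : Fin p → ℝ) (Q : Matrix (Fin n) (Fin n) ℝ) (hQ : Q.PosDef)
    (h : Fin n → ℝ) (ε : ℝ) (hε : 0 < ε)
    (hεle : ε ≤ 2 * (⨅ i, hAAT.eigenvalues i) * (⨅ i, hQ.1.eigenvalues i) /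
      ((⨆ i, hQ.1.eigenvalues i) ^ 2
        + 2 * (⨅ i, hQ.1.eigenvalues i) * (⨆ i, hQ.1.eigenvalues i)
        - (⨅ i, hQ.1.eigenvalues i) ^ 2))
    (fε : (Fin n → ℝ) → ℝ)
    (hfε : ∀ x, fε x = (1 / 2) * (x ⬝ᵥ Q.mulVec x) + h ⬝ᵥ x
      - (((A * Aᵀ)⁻¹ * A).mulVec (Q.mulVec x + h)) ⬝ᵥ (A.mulVec x - b)
      + (1 / ε) * ((A.mulVec x - b) ⬝ᵥ (A.mulVec x - b))) :
    (Q + (2 / ε) • (Aᵀ * A) - Q * (Aᵀ * (A * Aᵀ)⁻¹ * A)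
      - (Aᵀ * (A * Aᵀ)⁻¹ * A) * Q).PosSemidef ∧
    ConvexOn ℝ Set.univ fε := by
  classical
  set S : Matrix (Fin p) (Fin p) ℝ := A * Aᵀ with hSdef
  set T : Matrix (Fin n) (Fin n) ℝ := Aᵀ * S⁻¹ * A with hTdef
  set lA : ℝ := ⨅ i, hAAT.eigenvalues i with hlA
  set lm : ℝ := ⨅ i, hQ.1.eigenvalues i with hlm
  set lM : ℝ := ⨆ i, hQ.1.eigenvalues i with hlM
  -- S is PSD
  have hS : S.PosSemidef := by
    have := posSemidef_self_mul_conjTranspose A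
    rwa [conjTranspose_eq_transpose_of_trivial] at this
  -- S has full rank, hence invertible
  have hSrank : S.rank = p := by rw [hSdef, rank_self_mul_transpose, hA]
  have heig_ne : ∀ i, hAAT.eigenvalues i ≠ 0 := by
    intro i hi
    have hcard : Fintype.card {j // hAAT.eigenvalues j ≠ 0} < Fintype.card (Fin p) :=
      Fintype.card_subtype_lt (x := i) (by simp [hi])
    rw [← hAAT.rank_eq_card_non_zero_eigs] at hcard
    simp [hSrank] at hcard
  have hSdet : IsUnit S.det := by
    rw [hAAT.det_eq_prod_eigenvalues]
    simp only [isUnit_iff_ne_zero]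
    exact Finset.prod_ne_zero_iff.mpr fun i _ => by exact_mod_cast heig_ne i
  -- eigenvalue bounds
  have heig_pos : ∀ i, 0 < hAAT.eigenvalues i :=
    fun i => lt_of_le_of_ne (hS.eigenvalues_nonneg i) (Ne.symm (heig_ne i))
  have hlA_le : ∀ i, lA ≤ hAAT.eigenvalues i := fun i =>
    ciInf_le (Set.Finite.bddBelow (Set.finite_range _)) i
  have hlA_pos : 0 < lA := by
    obtain ⟨i, hi⟩ := exists_eq_ciInf_of_finite (f := fun i => hAAT.eigenvalues i)
    rw [hlA, ← hi]; exact heig_pos i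
  have hlm_le : ∀ i, lm ≤ hQ.1.eigenvalues i := fun i =>
    ciInf_le (Set.Finite.bddBelow (Set.finite_range _)) i
  have hlM_ge : ∀ i, hQ.1.eigenvalues i ≤ lM := fun i =>
    le_ciSup (Set.Finite.bddAbove (Set.finite_range _)) i
  have hlm_pos : 0 < lm := by
    obtain ⟨i, hi⟩ := exists_eq_ciInf_of_finite (f := fun i => hQ.1.eigenvalues i)
    rw [hlm, ← hi]; exact hQ.eigenvalues_pos i
  have hlmM : lm ≤ lM := le_trans (hlm_le (Classical.arbitrary _)) (hlM_ge _)
  -- arithmetic: ε * lM ≤ 2 * lA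
  have harith : ε * lM ≤ 2 * lA := by
    have hd : 0 < lM ^ 2 + 2 * lm * lM - lm ^ 2 := by nlinarith
    have h1 : ε * (lM ^ 2 + 2 * lm * lM - lm ^ 2) ≤ 2 * lA * lm := by
      rw [hlA, hlm, hlM] at hεle ⊢
      exact (le_div_iff₀ hd).mp hεle
    have hstep : ε * lM * lm ≤ 2 * lA * lm := by
      nlinarith [mul_nonneg hε.le (mul_nonneg (sub_nonneg.mpr hlmM)
        (by linarith : (0:ℝ) ≤ lM + lm))]
    exact le_of_mul_le_mul_right hstep hlm_pos
  -- matrix facts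
  have hSymS : Sᵀ = S := by
    have := hAAT.eq
    rwa [conjTranspose_eq_transpose_of_trivial] at this
  have hSinvT : (S⁻¹)ᵀ = S⁻¹ := by rw [transpose_nonsing_inv, hSymS]
  have hQT : Qᵀ = Q := by
    have := hQ.1.eq
    rwa [conjTranspose_eq_transpose_of_trivial] at this
  have hTT : Tᵀ = T := by
    rw [hTdef, transpose_mul, transpose_mul, transpose_transpose, hSinvT, Matrix.mul_assoc]
  have hATeq : A * T = A := by
    rw [hTdef, ← Matrix.mul_assoc, ← Matrix.mul_assoc, ← hSdef,
      Matrix.mul_nonsing_inv _ hSdet, Matrix.one_mul]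
  -- key scalar identities
  have key1 : ∀ z : Fin n → ℝ, z ⬝ᵥ (Aᵀ * A) *ᵥ z = (A *ᵥ z) ⬝ᵥ (A *ᵥ z) := by
    intro z
    rw [← Matrix.mulVec_mulVec, ← mulVec_dot]
  have keyQ : ∀ y z : Fin n → ℝ, y ⬝ᵥ Q *ᵥ z = (Q *ᵥ y) ⬝ᵥ z := by
    intro y z
    rw [mulVec_dot, hQT]
  have key2 : ∀ z : Fin n → ℝ, z ⬝ᵥ (Q * T) *ᵥ z = (Q *ᵥ z) ⬝ᵥ (T *ᵥ z) := by
    intro z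
    rw [← Matrix.mulVec_mulVec, keyQ]
  have key3 : ∀ z : Fin n → ℝ, z ⬝ᵥ (T * Q) *ᵥ z = (Q *ᵥ z) ⬝ᵥ (T *ᵥ z) := by
    intro z
    rw [← Matrix.mulVec_mulVec]
    have e : z ⬝ᵥ T *ᵥ (Q *ᵥ z) = (Tᵀ *ᵥ z) ⬝ᵥ (Q *ᵥ z) := by
      rw [mulVec_dot, transpose_transpose]
    rw [e, hTT, dotProduct_comm]
  -- PSD helper instantiations
  have hQlow : ∀ z : Fin n → ℝ, lm * (z ⬝ᵥ z) ≤ z ⬝ᵥ Q *ᵥ z := by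
    intro z
    have := (psd_quad_comb hQ.1 0 1 (-lm) (fun i => by nlinarith [hlm_le i])).dotProduct_mulVec_nonneg z
    simp only [star_trivial, zero_smul, one_smul, zero_add, add_mulVec, neg_smul, smul_mulVec,
      one_mulVec, dotProduct_add, neg_mulVec, dotProduct_neg, dotProduct_smul, smul_eq_mul] at this
    linarith
  have hQhigh : ∀ z : Fin n → ℝ, z ⬝ᵥ Q *ᵥ z ≤ lM * (z ⬝ᵥ z) := by
    intro z
    have := (psd_quad_comb hQ.1 0 (-1) lM (fun i => by nlinarith [hlM_ge i])).dotProduct_mulVec_nonneg z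
    simp only [star_trivial, zero_smul, zero_add, add_mulVec, neg_smul, smul_mulVec,
      one_mulVec, one_smul, dotProduct_add, neg_mulVec, dotProduct_neg, dotProduct_smul,
      smul_eq_mul] at this
    linarith
  have hSS : ∀ w : Fin p → ℝ, lA * (w ⬝ᵥ S *ᵥ w) ≤ w ⬝ᵥ (S * S) *ᵥ w := by
    intro w
    have := (psd_quad_comb hAAT 1 (-lA) 0
      (fun i => by nlinarith [hlA_le i, heig_pos i, hlA_pos])).dotProduct_mulVec_nonneg w
    simp only [star_trivial, one_smul, zero_smul, add_zero, add_mulVec, neg_smul,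
      smul_mulVec, dotProduct_add, neg_mulVec, dotProduct_neg, dotProduct_smul,
      smul_eq_mul] at this
    linarith
  -- the matrix, pointwise nonnegativity
  set M : Matrix (Fin n) (Fin n) ℝ :=
    Q + (2 / ε) • (Aᵀ * A) - Q * T - T * Q with hMdef
  have hMpt : ∀ x : Fin n → ℝ, 0 ≤ x ⬝ᵥ M *ᵥ x := by
    intro x
    set w : Fin p → ℝ := (S⁻¹ * A) *ᵥ x with hw
    set u : Fin n → ℝ := T *ᵥ x with hu
    have hu2 : u = Aᵀ *ᵥ w := by
      rw [hu, hw, hTdef, Matrix.mulVec_mulVec, Matrix.mul_assoc]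
    have hAu : A *ᵥ u = S *ᵥ w := by
      rw [hu2, Matrix.mulVec_mulVec, hSdef]
    have hAx : A *ᵥ x = A *ᵥ u := by
      rw [hu, Matrix.mulVec_mulVec, hATeq]
    set v : Fin n → ℝ := x - u with hv
    -- expand x ⬝ᵥ M x
    have hexp : x ⬝ᵥ M *ᵥ x
        = v ⬝ᵥ Q *ᵥ v - u ⬝ᵥ Q *ᵥ u + (2 / ε) * ((A *ᵥ x) ⬝ᵥ (A *ᵥ x)) := by
      have hvq : v ⬝ᵥ Q *ᵥ v
          = x ⬝ᵥ Q *ᵥ x - 2 * ((Q *ᵥ x) ⬝ᵥ u) + u ⬝ᵥ Q *ᵥ u := by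
        rw [hv]
        simp only [Matrix.mulVec_sub, dotProduct_sub, sub_dotProduct]
        have e1 : x ⬝ᵥ Q *ᵥ u = (Q *ᵥ x) ⬝ᵥ u := keyQ x u
        have e2 : u ⬝ᵥ Q *ᵥ x = (Q *ᵥ x) ⬝ᵥ u := by
          rw [keyQ u x, dotProduct_comm]
          rw [mulVec_dot, hQT, dotProduct_comm]
        rw [e1, e2]; ring
      rw [hMdef]
      simp only [sub_mulVec, add_mulVec, smul_mulVec, dotProduct_sub, dotProduct_add,
        dotProduct_smul, smul_eq_mul]
      rw [key1, key2, key3, ← hu]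
      linarith [hvq]
    rw [hexp, hAx, hAu]
    have i1 := hQlow v
    have i2 := hQhigh u
    have i3 := hSS w
    have i4 : (0:ℝ) ≤ v ⬝ᵥ v := by
      simpa using dotProduct_self_star_nonneg (R := ℝ) v
    have i5 : u ⬝ᵥ u = w ⬝ᵥ S *ᵥ w := by
      rw [hu2, mulVec_dot, transpose_transpose, Matrix.mulVec_mulVec, hSdef]
    have i6 : (S *ᵥ w) ⬝ᵥ (S *ᵥ w) = w ⬝ᵥ (S * S) *ᵥ w := by
      rw [mulVec_dot, hSymS, Matrix.mulVec_mulVec]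
    rw [i6]
    have i7 : (0:ℝ) ≤ u ⬝ᵥ u := by
      simpa using dotProduct_self_star_nonneg (R := ℝ) u
    rw [i5] at i7
    rw [i5] at i2
    have h8 : lM * (w ⬝ᵥ S *ᵥ w) ≤ 2 * (w ⬝ᵥ (S * S) *ᵥ w) / ε := by
      rw [le_div_iff₀ hε]
      nlinarith [mul_le_mul_of_nonneg_right harith i7, i3]
    have h9 : 2 * (w ⬝ᵥ (S * S) *ᵥ w) / ε = 2 * (w ⬝ᵥ (S * S) *ᵥ w) / ε := rfl
    have h10 : 0 ≤ lm * (v ⬝ᵥ v) := mul_nonneg hlm_pos.le i4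
    have hgoal : 2 * (A *ᵥ x ⬝ᵥ A *ᵥ x) / ε = 2 * (w ⬝ᵥ (S * S) *ᵥ w) / ε := by
      rw [hAx, hAu, i6]
    rw [div_mul_eq_mul_div]
    linarith [i1, i2, h8, h10]
  have hMH : M.IsHermitian := by
    rw [Matrix.IsHermitian, conjTranspose_eq_transpose_of_trivial]
    rw [hMdef]
    simp only [transpose_sub, transpose_add, transpose_smul, transpose_mul, transpose_transpose,
      hTT, hQT]
    rw [sub_right_comm]
  have hPSD : M.PosSemidef := .of_dotProduct_mulVec_nonneg hMH (fun x => by simpa using hMpt x)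
  refine ⟨hPSD, ?_⟩
  -- convexity
  have eT : ∀ z : Fin n → ℝ,
      ((S⁻¹ * A) *ᵥ (Q *ᵥ z)) ⬝ᵥ (A *ᵥ z) = (Q *ᵥ z) ⬝ᵥ T *ᵥ z := by
    intro z
    rw [mulVec_dot, transpose_mul, hSinvT, Matrix.mulVec_mulVec, ← hTdef]
  have hexp2 : ∀ z : Fin n → ℝ, fε z
      = (1/2) * (z ⬝ᵥ M *ᵥ z)
        + (h ⬝ᵥ z - ((S⁻¹ * A) *ᵥ h) ⬝ᵥ (A *ᵥ z) + ((S⁻¹ * A) *ᵥ (Q *ᵥ z)) ⬝ᵥ b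
          - 2 / ε * ((A *ᵥ z) ⬝ᵥ b))
        + (((S⁻¹ * A) *ᵥ h) ⬝ᵥ b + 1 / ε * (b ⬝ᵥ b)) := by
    intro z
    rw [hfε z]
    have ecomm : b ⬝ᵥ (A *ᵥ z) = (A *ᵥ z) ⬝ᵥ b := dotProduct_comm _ _
    simp only [hMdef, mulVec_add, dotProduct_sub, sub_dotProduct, dotProduct_add,
      add_dotProduct, sub_mulVec, add_mulVec, smul_mulVec, dotProduct_smul, smul_eq_mul]
    rw [key1 z, key2 z, key3 z, eT z, ecomm]
    ring
  refine ⟨convex_univ, fun x _ y _ a c ha hc hac => ?_⟩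
  simp only [smul_eq_mul]
  obtain rfl : c = 1 - a := by linarith
  rw [hexp2, hexp2, hexp2]
  have hz : 0 ≤ (x - y) ⬝ᵥ M *ᵥ (x - y) := hMpt _
  have hb2 : (x - y) ⬝ᵥ M *ᵥ (x - y)
      = x ⬝ᵥ M *ᵥ x - x ⬝ᵥ M *ᵥ y - y ⬝ᵥ M *ᵥ x + y ⬝ᵥ M *ᵥ y := by
    simp only [mulVec_sub, dotProduct_sub, sub_dotProduct]
    ring
  rw [hb2] at hz
  have hb1 : (a • x + (1 - a) • y) ⬝ᵥ M *ᵥ (a • x + (1 - a) • y)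
      = a^2 * (x ⬝ᵥ M *ᵥ x) + a*(1-a)*(x ⬝ᵥ M *ᵥ y) + a*(1-a)*(y ⬝ᵥ M *ᵥ x)
        + (1-a)^2*(y ⬝ᵥ M *ᵥ y) := by
    simp only [mulVec_add, mulVec_smul, dotProduct_add, add_dotProduct, dotProduct_smul,
      smul_dotProduct, smul_eq_mul]
    ring
  simp only [mulVec_add, mulVec_smul, dotProduct_add, add_dotProduct, dotProduct_smul,
    smul_dotProduct, smul_eq_mul, hb1]
  nlinarith [mul_nonneg (mul_nonneg ha hc) hz]
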